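/- Let G be a simple graph, x_i x_j an edge of G, A ⊆ N_G(x_i) ∪ N_G(x_j) with x_i, x_j ∉ A, and L := N_{G\A}(x_i) ∩ N_{G\A}(x_j) = {x_1,…,x_t} with t ≥ 1. Define H to be the graph with vertex set V(G \ A) ∪ {y_1,…,y_t} and edge set E(G\A) ∪ {x_p x_q : x_p ∈ N_{G\A}(x_i), x_q ∈ N_{G\A}(x_j), x_p ≠ x_q} ∪ {x_1 y_1,…,x_t y_t}. Then the polarization of the ideal (I(G\A)^2 : x_i x_j) equals the edge ideal I(H). -/

import Mathlib

open MvPolynomial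

/-- The closed neighborhood of a vertex. -/
def closedNbhd {V : Type} (G : SimpleGraph V) (x : V) : Set V :=
  insert x (G.neighborSet x)

/-- A finite set of vertices is a star packing if the closed neighborhoods of its
elements (the vertex sets of the corresponding stars) are pairwise disjoint. -/
def IsStarPacking {V : Type} (G : SimpleGraph V) (s : Finset V) : Prop :=
  (s : Set V).Pairwise fun x y => Disjoint (closedNbhd G x) (closedNbhd G y)

/-- The star packing number `α₂(G)`: the maximum size of a star packing. -/
noncomputable def starPackingNumber {V : Type} (G : SimpleGraph V) : ℕ :=
  sSup {n | ∃ s : Finset V, IsStarPacking G s ∧ s.card = n}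

/-- The whiskered triangle `W(K₃)`: a triangle on vertices `0, 1, 2` with pendant
vertices `3, 4, 5` attached to them respectively. -/
def whiskeredTriangle : SimpleGraph (Fin 6) :=
  SimpleGraph.fromEdgeSet {s(0, 1), s(0, 2), s(1, 2), s(0, 3), s(1, 4), s(2, 5)}

/-- `G` is `W(K₃)`-free: no induced subgraph of `G` is isomorphic to the whiskered
triangle. -/
def WK3Free {V : Type} (G : SimpleGraph V) : Prop :=
  ¬ ∃ f : Fin 6 ↪ V, ∀ a b, whiskeredTriangle.Adj a b ↔ G.Adj (f a) (f b)

/-- The edge ideal of a graph `G`, in the polynomial ring `K[x_v : v ∈ V]`. -/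
noncomputable def edgeIdeal {V : Type} (K : Type) [Field K] (G : SimpleGraph V) :
    Ideal (MvPolynomial V K) :=
  Ideal.span {m | ∃ x y, G.Adj x y ∧ m = X x * X y}

/-- The edge ideal of the induced subgraph `G \ A`, in the polynomial ring
`S_A = K[x_v : v ∉ A]`. -/
noncomputable def edgeIdealOn {V : Type} (K : Type) [Field K] (G : SimpleGraph V)
    (A : Set V) : Ideal (MvPolynomial {v : V // v ∉ A} K) :=
  Ideal.span {m | ∃ x y : {v : V // v ∉ A}, G.Adj x.1 y.1 ∧ m = X x * X y}

/-- The polarization of a monomial ideal `J ⊆ K[x_v : v ∈ W]`, inside the larger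
polynomial ring `K[x_{v,k} : v ∈ W, k ∈ ℕ]` (with `x_v` identified with `x_{v,0}`):
it is generated by the polarizations `∏_v x_{v,0} ⋯ x_{v,d(v)-1}` of the monomials
`∏_v x_v^{d(v)}` belonging to `J`. -/
noncomputable def polarizationIdeal {W : Type} (K : Type) [Field K]
    (J : Ideal (MvPolynomial W K)) : Ideal (MvPolynomial (W × ℕ) K) :=
  Ideal.span {m | ∃ d : W →₀ ℕ, MvPolynomial.monomial d (1 : K) ∈ J ∧
    m = d.prod fun v e => ∏ k ∈ Finset.range e, X (v, k)}

/-- The graph `H`: on the vertices `x_v = (v, 0)` of `G \ A` it consists of the edges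
of `G \ A` together with all pairs `x_p x_q` with `p ∈ N_{G\A}(x_i)`,
`q ∈ N_{G\A}(x_j)`, `p ≠ q`; moreover each vertex `x_v` with
`v ∈ L = N_{G\A}(x_i) ∩ N_{G\A}(x_j)` gets a whisker to the new vertex
`y_v = (v, 1)`. -/
def polGraphH {V : Type} (G : SimpleGraph V) (xi xj : V) (A : Set V) :
    SimpleGraph ({v : V // v ∉ A} × ℕ) :=
  SimpleGraph.fromRel fun a b =>
    (a.2 = 0 ∧ b.2 = 0 ∧
      (G.Adj a.1.1 b.1.1 ∨ (G.Adj xi a.1.1 ∧ G.Adj xj b.1.1 ∧ a.1 ≠ b.1))) ∨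
    (a.1 = b.1 ∧ a.2 = 0 ∧ b.2 = 1 ∧ G.Adj xi a.1.1 ∧ G.Adj xj a.1.1)

section AUX


/-- key combinatorial lemma -/
lemma polar_key {W : Type} {Adj : W → W → Prop} (hs : ∀ {x y}, Adj x y → Adj y x)
    {i j : W} (hij : i ≠ j) {d : W →₀ ℕ} {a b c e : W}
    (hab : Adj a b) (hce : Adj c e)
    (hle : (Finsupp.single a 1 + Finsupp.single b 1) +
        (Finsupp.single c 1 + Finsupp.single e 1)
      ≤ d + (Finsupp.single i 1 + Finsupp.single j 1)) :
    ∃ p q, (Adj p q ∨ (Adj i p ∧ Adj j q)) ∧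
      Finsupp.single p 1 + Finsupp.single q 1 ≤ d := by
  classical
  have hle' : ∀ v, (Finsupp.single a 1 v + Finsupp.single b 1 v) +
      (Finsupp.single c 1 v + Finsupp.single e 1 v)
      ≤ d v + (Finsupp.single i 1 v + Finsupp.single j 1 v) := by
    intro v
    have := Finsupp.le_def.mp hle v
    simpa using this
  have pair : ∀ p q : W, (∀ v, (Finsupp.single p 1 : W →₀ ℕ) v + Finsupp.single q 1 v ≤ d v) →
      Finsupp.single p 1 + Finsupp.single q 1 ≤ d := by
    intro p q h
    rw [Finsupp.le_def]
    intro v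
    simpa using h v
  have core : ∀ a b c e : W, Adj a b → Adj c e →
      (∀ v, (Finsupp.single a 1 v + Finsupp.single b 1 v) +
        ((Finsupp.single c 1 : W →₀ ℕ) v + Finsupp.single e 1 v)
        ≤ d v + (Finsupp.single i 1 v + Finsupp.single j 1 v)) → a = i → c = j →
      ∃ p q, (Adj p q ∨ (Adj i p ∧ Adj j q)) ∧
        Finsupp.single p 1 + Finsupp.single q 1 ≤ d := by
    rintro a b c e hab hce hle' rfl rfl
    refine ⟨b, e, Or.inr ⟨hab, hce⟩, pair _ _ fun v => ?_⟩
    have h := hle' v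
    simp only [Finsupp.single_apply] at h ⊢
    split_ifs at h ⊢ <;> omega
  by_cases h2 : ∀ v, (Finsupp.single a 1 : W →₀ ℕ) v + Finsupp.single b 1 v ≤ d v
  · exact ⟨a, b, Or.inl hab, pair _ _ h2⟩
  by_cases h1 : ∀ v, (Finsupp.single c 1 : W →₀ ℕ) v + Finsupp.single e 1 v ≤ d v
  · exact ⟨c, e, Or.inl hce, pair _ _ h1⟩
  push_neg at h1 h2
  obtain ⟨v1, hv1⟩ := h2
  obtain ⟨v2, hv2⟩ := h1
  have hv1ij : v1 = i ∨ v1 = j := by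
    by_contra h
    push_neg at h
    have h' := hle' v1
    rw [Finsupp.single_eq_of_ne' (Ne.symm h.1), Finsupp.single_eq_of_ne' (Ne.symm h.2)] at h'
    omega
  have hv2ij : v2 = i ∨ v2 = j := by
    by_contra h
    push_neg at h
    have h' := hle' v2
    rw [Finsupp.single_eq_of_ne' (Ne.symm h.1), Finsupp.single_eq_of_ne' (Ne.symm h.2)] at h'
    omega
  have mem1 : a = v1 ∨ b = v1 := by
    by_contra h
    push_neg at h
    rw [Finsupp.single_eq_of_ne' h.1, Finsupp.single_eq_of_ne' h.2] at hv1
    omega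
  have mem2 : c = v2 ∨ e = v2 := by
    by_contra h
    push_neg at h
    rw [Finsupp.single_eq_of_ne' h.1, Finsupp.single_eq_of_ne' h.2] at hv2
    omega
  rcases hv1ij with rfl | rfl <;> rcases hv2ij with rfl | rfl
  · -- both fail at i : contradiction
    exfalso
    have h' := hle' v2
    rw [Finsupp.single_eq_same, Finsupp.single_eq_of_ne' (Ne.symm hij)] at h'
    omega
  · -- edge1 fails at i =: v1, edge2 fails at j =: v2
    rcases mem1 with rfl | rfl <;> rcases mem2 with rfl | rfl
    · exact core a b c e hab hce hle' rfl rfl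
    · exact core a b e c hab (hs hce) (fun v => by have := hle' v; omega) rfl rfl
    · exact core b a c e (hs hab) hce (fun v => by have := hle' v; omega) rfl rfl
    · exact core b a e c (hs hab) (hs hce) (fun v => by have := hle' v; omega) rfl rfl
  · -- edge1 fails at j, edge2 fails at i
    rcases mem1 with rfl | rfl <;> rcases mem2 with rfl | rfl
    · exact core c e a b hce hab (fun v => by have := hle' v; omega) rfl rfl
    · exact core e c a b (hs hce) hab (fun v => by have := hle' v; omega) rfl rfl
    · exact core c e b a hce (hs hab) (fun v => by have := hle' v; omega) rfl rfl
    · exact core e c b a (hs hce) (hs hab) (fun v => by have := hle' v; omega) rfl rfl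
  · -- both fail at j : contradiction
    exfalso
    have h' := hle' v2
    rw [Finsupp.single_eq_same, Finsupp.single_eq_of_ne' hij] at h'
    omega

section PolHelpers
variable {W : Type} (K : Type) [Field K]

/-- the polarization of a single exponent vector -/
noncomputable def polMon (d : W →₀ ℕ) : MvPolynomial (W × ℕ) K :=
  d.prod fun v e => ∏ k ∈ Finset.range e, X (v, k)

lemma polMon_dvd {q d : W →₀ ℕ} (h : q ≤ d) : (polMon K q : MvPolynomial (W × ℕ) K) ∣ polMon K d := by
  refine Finsupp.prod_dvd_prod_of_subset_of_dvd (Finsupp.support_mono h) ?_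
  intro a _
  exact Finset.prod_dvd_prod_of_subset _ _ _ (Finset.range_subset_range.mpr (Finsupp.le_def.mp h a))

lemma polMon_pair {a b : W} (hne : a ≠ b) :
    (polMon K (Finsupp.single a 1 + Finsupp.single b 1) : MvPolynomial (W × ℕ) K)
      = X (a, 0) * X (b, 0) := by
  rw [polMon, Finsupp.prod_add_index_of_disjoint]
  · rw [Finsupp.prod_single_index (by simp), Finsupp.prod_single_index (by simp)]
    simp
  · rw [Finsupp.support_single_ne_zero _ one_ne_zero,
      Finsupp.support_single_ne_zero _ one_ne_zero]
    simpa using hne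

lemma polMon_sq (a : W) :
    (polMon K (Finsupp.single a 2) : MvPolynomial (W × ℕ) K) = X (a, 0) * X (a, 1) := by
  rw [polMon, Finsupp.prod_single_index (by simp)]
  rw [Finset.prod_range_succ, Finset.prod_range_one]

lemma X_mul_X_eq_monomial (a b : W) :
    (X a * X b : MvPolynomial W K)
      = monomial (Finsupp.single a 1 + Finsupp.single b 1) 1 := by
  rw [MvPolynomial.X, MvPolynomial.X, monomial_mul, one_mul]

end PolHelpers

end AUX

/-- Let `x_i x_j` be an edge of `G`, `A ⊆ N_G(x_i) ∪ N_G(x_j)` with `x_i, x_j ∉ A`,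
and suppose `L = N_{G\A}(x_i) ∩ N_{G\A}(x_j)` is nonempty.  Then the polarization of
the ideal `(I(G\A)² : x_i x_j)` equals the edge ideal of the graph `H`. -/
theorem polarization_colon_square_eq_edgeIdeal {V : Type} (K : Type) [Field K]
    (G : SimpleGraph V) (xi xj : V) (hij : G.Adj xi xj) (A : Set V)
    (hA : A ⊆ G.neighborSet xi ∪ G.neighborSet xj) (hiA : xi ∉ A) (hjA : xj ∉ A)
    (hL : ∃ v : {v : V // v ∉ A}, G.Adj xi v.1 ∧ G.Adj xj v.1) :
    polarizationIdeal K ((edgeIdealOn K G A ^ 2).colon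
        ((Ideal.span {X ⟨xi, hiA⟩ * X ⟨xj, hjA⟩} : Ideal (MvPolynomial {v : V // v ∉ A} K)) :
          Set (MvPolynomial {v : V // v ∉ A} K))) =
      edgeIdeal K (polGraphH G xi xj A) := by
  classical
  set i : {v : V // v ∉ A} := ⟨xi, hiA⟩ with hi_def
  set j : {v : V // v ∉ A} := ⟨xj, hjA⟩ with hj_def
  set E : Set ({v : V // v ∉ A} →₀ ℕ) :=
    {s | ∃ x y : {v : V // v ∉ A}, G.Adj x.1 y.1 ∧
      s = Finsupp.single x 1 + Finsupp.single y 1} with hE_def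
  have hI : edgeIdealOn K G A = Ideal.span ((fun s => monomial s (1:K)) '' E) := by
    unfold edgeIdealOn
    congr 1
    ext m
    constructor
    · rintro ⟨x, y, hxy, rfl⟩
      exact ⟨_, ⟨x, y, hxy, rfl⟩, (X_mul_X_eq_monomial K x y).symm⟩
    · rintro ⟨s, ⟨x, y, hxy, rfl⟩, rfl⟩
      exact ⟨x, y, hxy, (X_mul_X_eq_monomial K x y).symm⟩
  have hI2 : edgeIdealOn K G A ^ 2 = Ideal.span ((fun s => monomial s (1:K)) ''
      {s | ∃ u ∈ E, ∃ w ∈ E, s = u + w}) := by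
    rw [hI, pow_two, Ideal.span_mul_span']
    congr 1
    ext m
    constructor
    · intro hm
      rw [Set.mem_mul] at hm
      obtain ⟨m1, ⟨u, hu, rfl⟩, m2, ⟨w, hw, rfl⟩, rfl⟩ := hm
      exact ⟨u + w, ⟨u, hu, w, hw, rfl⟩, by simp [monomial_mul]⟩
    · rintro ⟨s, ⟨u, hu, w, hw, rfl⟩, rfl⟩
      rw [Set.mem_mul]
      exact ⟨_, ⟨u, hu, rfl⟩, _, ⟨w, hw, rfl⟩, by simp [monomial_mul]⟩
  have hijne : i ≠ j := fun h => hij.ne (congrArg Subtype.val h)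
  apply le_antisymm
  · -- polarization ≤ edge ideal of H
    rw [polarizationIdeal, Ideal.span_le]
    rintro m ⟨d, hd, rfl⟩
    rw [Ideal.mem_colon_span_singleton, hI2] at hd
    have hmon : monomial d (1:K) * (X i * X j)
        = monomial (d + (Finsupp.single i 1 + Finsupp.single j 1)) 1 := by
      rw [X_mul_X_eq_monomial, monomial_mul, one_mul]
    rw [hmon, mem_ideal_span_monomial_image] at hd
    obtain ⟨s, hsE2, hsle⟩ := hd (d + (Finsupp.single i 1 + Finsupp.single j 1)) (by
      rw [support_monomial]
      simp)
    obtain ⟨u, ⟨x1, y1, h1, rfl⟩, w, ⟨x2, y2, h2, rfl⟩, rfl⟩ := hsE2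
    obtain ⟨p, q, hpq, hled⟩ :=
      polar_key (Adj := fun a b : {v : V // v ∉ A} => G.Adj a.1 b.1)
        (fun {x y} h => h.symm) hijne h1 h2 hsle
    show polMon K d ∈ _
    rcases hpq with hadj | ⟨hip, hjq⟩
    · have hne : p ≠ q := fun h => hadj.ne (congrArg Subtype.val h)
      have hgen : (polGraphH G xi xj A).Adj (p, 0) (q, 0) := by
        rw [polGraphH, SimpleGraph.fromRel_adj]
        exact ⟨fun h => hne (congrArg Prod.fst h), Or.inl (Or.inl ⟨rfl, rfl, Or.inl hadj⟩)⟩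
      obtain ⟨c, hc⟩ := polMon_dvd (K := K) hled
      rw [hc]
      refine Ideal.mul_mem_right c _ ?_
      rw [polMon_pair K hne]
      exact Ideal.subset_span ⟨(p, 0), (q, 0), hgen, rfl⟩
    · by_cases hne : p = q
      · subst hne
        have h2 : Finsupp.single p 1 + Finsupp.single p 1 = Finsupp.single p 2 := by
          rw [← Finsupp.single_add]
        rw [h2] at hled
        have hgen : (polGraphH G xi xj A).Adj (p, 0) (p, 1) := by
          rw [polGraphH, SimpleGraph.fromRel_adj]
          exact ⟨fun h => by simpa using congrArg Prod.snd h,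
            Or.inl (Or.inr ⟨rfl, rfl, rfl, hip, hjq⟩)⟩
        obtain ⟨c, hc⟩ := polMon_dvd (K := K) hled
        rw [hc]
        refine Ideal.mul_mem_right c _ ?_
        rw [polMon_sq K p]
        exact Ideal.subset_span ⟨(p, 0), (p, 1), hgen, rfl⟩
      · have hgen : (polGraphH G xi xj A).Adj (p, 0) (q, 0) := by
          rw [polGraphH, SimpleGraph.fromRel_adj]
          exact ⟨fun h => hne (congrArg Prod.fst h),
            Or.inl (Or.inl ⟨rfl, rfl, Or.inr ⟨hip, hjq, hne⟩⟩)⟩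
        obtain ⟨c, hc⟩ := polMon_dvd (K := K) hled
        rw [hc]
        refine Ideal.mul_mem_right c _ ?_
        rw [polMon_pair K hne]
        exact Ideal.subset_span ⟨(p, 0), (q, 0), hgen, rfl⟩
  · -- edge ideal of H ≤ polarization
    have main : ∀ x y : {v : V // v ∉ A} × ℕ,
        ((x.2 = 0 ∧ y.2 = 0 ∧
          (G.Adj x.1.1 y.1.1 ∨ (G.Adj xi x.1.1 ∧ G.Adj xj y.1.1 ∧ x.1 ≠ y.1))) ∨
         (x.1 = y.1 ∧ x.2 = 0 ∧ y.2 = 1 ∧ G.Adj xi x.1.1 ∧ G.Adj xj x.1.1)) →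
        X x * X y ∈ polarizationIdeal K ((edgeIdealOn K G A ^ 2).colon
          ((Ideal.span {X i * X j} : Ideal (MvPolynomial {v : V // v ∉ A} K)) :
            Set (MvPolynomial {v : V // v ∉ A} K))) := by
      rintro x y (⟨hx0, hy0, hcase⟩ | ⟨hxy1, hx0, hy1, hadji, hadjj⟩)
      · -- level 0 edge
        have hx : x = (x.1, 0) := by rw [← hx0]
        have hy : y = (y.1, 0) := by rw [← hy0]
        have hne : x.1 ≠ y.1 := by
          rcases hcase with h | h
          · exact fun hh => h.ne (congrArg Subtype.val hh)
          · exact h.2.2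
        refine Ideal.subset_span
          ⟨Finsupp.single x.1 1 + Finsupp.single y.1 1, ?_, ?_⟩
        · rw [Ideal.mem_colon_span_singleton, hI2]
          rcases hcase with h | h
          · refine Ideal.subset_span ⟨(Finsupp.single i 1 + Finsupp.single j 1) +
              (Finsupp.single x.1 1 + Finsupp.single y.1 1),
              ⟨_, ⟨i, j, hij, rfl⟩, _, ⟨x.1, y.1, h, rfl⟩, rfl⟩, ?_⟩
            rw [X_mul_X_eq_monomial, monomial_mul, one_mul]
            congr 1
            abel
          · refine Ideal.subset_span ⟨(Finsupp.single i 1 + Finsupp.single x.1 1) +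
              (Finsupp.single j 1 + Finsupp.single y.1 1),
              ⟨_, ⟨i, x.1, h.1, rfl⟩, _, ⟨j, y.1, h.2.1, rfl⟩, rfl⟩, ?_⟩
            rw [X_mul_X_eq_monomial, monomial_mul, one_mul]
            congr 1
            abel
        · show X x * X y = polMon K _
          rw [polMon_pair K hne, hx, hy]
      · -- whisker edge
        have hx : x = (x.1, 0) := by rw [← hx0]
        have hy : y = (x.1, 1) := by rw [hxy1, ← hy1]
        refine Ideal.subset_span ⟨Finsupp.single x.1 2, ?_, ?_⟩
        · rw [Ideal.mem_colon_span_singleton, hI2]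
          refine Ideal.subset_span ⟨(Finsupp.single i 1 + Finsupp.single x.1 1) +
            (Finsupp.single j 1 + Finsupp.single x.1 1),
            ⟨_, ⟨i, x.1, hadji, rfl⟩, _, ⟨j, x.1, hadjj, rfl⟩, rfl⟩, ?_⟩
          rw [X_mul_X_eq_monomial, monomial_mul, one_mul]
          congr 1
          have : (Finsupp.single x.1 2 : {v : V // v ∉ A} →₀ ℕ)
              = Finsupp.single x.1 1 + Finsupp.single x.1 1 := by
            rw [← Finsupp.single_add]
          rw [this]
          abel
        · show X x * X y = polMon K _
          rw [polMon_sq K x.1, hx, hy]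
    rw [edgeIdeal, Ideal.span_le]
    rintro m ⟨x, y, hxy, rfl⟩
    rw [polGraphH, SimpleGraph.fromRel_adj] at hxy
    rcases hxy.2 with h | h
    · exact main x y h
    · rw [mul_comm (X x) (X y)]
      exact main y x h
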